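/- Consider the map g: ℝ² → ℝ² given by g(w, z) = (c₁·z·|w|^{a₂}, c₂·sign(w)|w|^{a₁}) with c₁, c₂ ≠ 0. If a₂ < 0, then for every sufficiently small ε > 0 the set of points (w,z) with |w| ≠ 0 and |z| sufficiently close to but not equal to 0 whose forward orbit stays in the ε-ball and converges to (0,0) is contained in the union of countably many curves, hence has Lebesgue measure zero. -/

import Mathlib

open Filter MeasureTheory Real
set_option maxHeartbeats 2000000

lemma stmt16_key (c₁ c₂ a₁ a₂ : ℝ) (hc₁ : c₁ ≠ 0) (hc₂ : c₂ ≠ 0) (ha₂ : a₂ < 0)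
    (g : ℝ × ℝ → ℝ × ℝ)
    (hg : ∀ w z : ℝ, g (w, z) = (c₁ * z * |w| ^ a₂, c₂ * Real.sign w * |w| ^ a₁))
    (p : ℝ × ℝ) (hp1 : p.1 ≠ 0) (hp2 : p.2 ≠ 0)
    (hb : ∀ k : ℕ, ‖g^[k] p‖ < 1)
    (htend : Tendsto (fun k : ℕ => g^[k] p) atTop (nhds 0)) :
    Real.log |p.2| =
      (Real.log |c₁| + Real.log |c₂|) / (1 - (a₂ - Real.sqrt (a₂^2 + 4*a₁))/2)
        - Real.log |c₁| - ((a₂ - Real.sqrt (a₂^2 + 4*a₁))/2) * Real.log |p.1| := by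
  set W : ℕ → ℝ := fun k => (g^[k] p).1 with hW
  set Z : ℕ → ℝ := fun k => (g^[k] p).2 with hZ
  have hstep : ∀ k, g^[k+1] p = (c₁ * Z k * |W k| ^ a₂, c₂ * Real.sign (W k) * |W k| ^ a₁) := by
    intro k
    rw [Function.iterate_succ_apply', ← Prod.mk.eta (p := g^[k] p), hg]
  have hne : ∀ k, W k ≠ 0 ∧ Z k ≠ 0 := by
    intro k
    induction k with
    | zero => exact ⟨hp1, hp2⟩
    | succ n ih =>
      have hWpos : (0:ℝ) < |W n| ^ a₂ := Real.rpow_pos_of_pos (abs_pos.2 ih.1) _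
      have hWpos' : (0:ℝ) < |W n| ^ a₁ := Real.rpow_pos_of_pos (abs_pos.2 ih.1) _
      have hsgn : Real.sign (W n) ≠ 0 := by simp [Real.sign_eq_zero_iff, ih.1]
      constructor
      · show (g^[n+1] p).1 ≠ 0
        rw [hstep n]
        exact mul_ne_zero (mul_ne_zero hc₁ ih.2) hWpos.ne'
      · show (g^[n+1] p).2 ≠ 0
        rw [hstep n]
        exact mul_ne_zero (mul_ne_zero hc₂ hsgn) hWpos'.ne'
  have habsW : ∀ k, |W (k+1)| = |c₁| * |Z k| * |W k| ^ a₂ := by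
    intro k
    have : W (k+1) = c₁ * Z k * |W k| ^ a₂ := by
      show (g^[k+1] p).1 = _; rw [hstep k]
    rw [this, abs_mul, abs_mul, abs_of_nonneg (Real.rpow_nonneg (abs_nonneg _) _)]
  have habsZ : ∀ k, |Z (k+1)| = |c₂| * |W k| ^ a₁ := by
    intro k
    have : Z (k+1) = c₂ * Real.sign (W k) * |W k| ^ a₁ := by
      show (g^[k+1] p).2 = _; rw [hstep k]
    have hs : |Real.sign (W k)| = 1 := by
      rcases (hne k).1.lt_or_gt with h|h
      · simp [Real.sign_of_neg h]
      · simp [Real.sign_of_pos h]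
    rw [this, abs_mul, abs_mul, hs, abs_of_nonneg (Real.rpow_nonneg (abs_nonneg _) _)]
    ring
  set u : ℕ → ℝ := fun k => Real.log |W k| with hu
  have hWposk : ∀ k, (0:ℝ) < |W k| := fun k => abs_pos.2 (hne k).1
  have hZposk : ∀ k, (0:ℝ) < |Z k| := fun k => abs_pos.2 (hne k).2
  have hu1 : ∀ k, u (k+1) = Real.log |c₁| + Real.log |Z k| + a₂ * u k := by
    intro k
    show Real.log |W (k+1)| = _
    rw [habsW k, Real.log_mul (mul_pos (abs_pos.2 hc₁) (hZposk k)).ne' (Real.rpow_pos_of_pos (hWposk k) _).ne',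
      Real.log_mul (abs_ne_zero.2 hc₁) (hZposk k).ne', Real.log_rpow (hWposk k)]
  have hz1 : ∀ k, Real.log |Z (k+1)| = Real.log |c₂| + a₁ * u k := by
    intro k
    rw [habsZ k, Real.log_mul (abs_ne_zero.2 hc₂) (Real.rpow_pos_of_pos (hWposk k) _).ne',
      Real.log_rpow (hWposk k)]
  set L : ℝ := Real.log |c₁| + Real.log |c₂| with hL
  have hrec : ∀ k, u (k+2) = L + a₂ * u (k+1) + a₁ * u k := by
    intro k
    rw [hu1 (k+1), hz1 k, hL]; ring
  have hub : ∀ k, u k < 0 := by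
    intro k
    have h1 : |W k| ≤ ‖g^[k] p‖ := by
      rw [Prod.norm_def]; exact le_max_of_le_left (le_of_eq (Real.norm_eq_abs _).symm)
    exact Real.log_neg (hWposk k) (lt_of_le_of_lt h1 (hb k))
  have hWtend : Tendsto W atTop (nhds 0) := by
    exact (continuous_fst.tendsto (0:ℝ×ℝ)).comp htend
  have hZtend : Tendsto Z atTop (nhds 0) := by
    exact (continuous_snd.tendsto (0:ℝ×ℝ)).comp htend
  have hulim : Tendsto u atTop atBot := by
    have h1 : Tendsto (fun k => |W k|) atTop (nhdsWithin 0 (Set.Ioi 0)) := by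
      apply tendsto_nhdsWithin_of_tendsto_nhds_of_eventually_within
      · simpa using hWtend.abs
      · exact Eventually.of_forall (fun k => hWposk k)
    exact Real.tendsto_log_nhdsGT_zero.comp h1
  -- case a₁ ≤ 0 : contradiction
  rcases le_or_gt a₁ 0 with ha1 | ha1
  · exfalso
    have hzge : ∀ k, |c₂| ≤ |Z (k+1)| := by
      intro k
      have h1 : 0 ≤ a₁ * u k := by nlinarith [hub k]
      have : Real.log |c₂| ≤ Real.log |Z (k+1)| := by rw [hz1 k]; linarith
      calc |c₂| = Real.exp (Real.log |c₂|) := (Real.exp_log (abs_pos.2 hc₂)).symm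
        _ ≤ Real.exp (Real.log |Z (k+1)|) := Real.exp_le_exp.2 this
        _ = |Z (k+1)| := Real.exp_log (hZposk (k+1))
    have hev : ∀ᶠ k in atTop, |Z k| < |c₂| := by
      have : Tendsto (fun k => |Z k|) atTop (nhds 0) := by simpa using hZtend.abs
      exact this.eventually_lt_const (abs_pos.2 hc₂)
    obtain ⟨k, hk⟩ := (hev.and (eventually_ge_atTop 1)).exists
    obtain ⟨m, rfl⟩ := Nat.exists_eq_add_of_le hk.2
    exact absurd hk.1 (not_lt.2 (by simpa [Nat.add_comm] using hzge m))
  rcases le_or_gt a₁ (1 + a₂) with hmid | hiv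
  · -- case (iii): 0 < a₁ ≤ 1 + a₂ : orbit log stays bounded, contradiction
    exfalso
    have hden : 0 < 1 - a₂ - a₁ := by linarith
    set ustar : ℝ := L / (1 - a₂ - a₁) with hustar
    have hfix : ustar = L + a₂ * ustar + a₁ * ustar := by
      rw [hustar]; field_simp
      ring
    set v : ℕ → ℝ := fun k => u k - ustar with hv
    set M : ℝ := max |v 0| |v 1| with hM
    have hMnn : 0 ≤ M := le_trans (abs_nonneg _) (le_max_left _ _)
    have hvrec : ∀ k, v (k+1+1) = a₂ * v (k+1) + a₁ * v k := by
      intro k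
      simp only [hv]
      rw [hrec k]
      linear_combination -hfix
    have hvb : ∀ k, |v k| ≤ M ∧ |v (k+1)| ≤ M := by
      intro k
      induction k with
      | zero => exact ⟨le_max_left _ _, le_max_right _ _⟩
      | succ n ih =>
        refine ⟨ih.2, ?_⟩
        rw [hvrec n]
        calc |a₂ * v (n+1) + a₁ * v n| ≤ |a₂ * v (n+1)| + |a₁ * v n| := abs_add_le _ _
          _ = (-a₂) * |v (n+1)| + a₁ * |v n| := by
              rw [abs_mul, abs_mul, abs_of_neg ha₂, abs_of_pos ha1]
          _ ≤ (-a₂) * M + a₁ * M := by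
              have h1 := ih.1; have h2 := ih.2
              have := mul_le_mul_of_nonneg_left ih.2 (by linarith : (0:ℝ) ≤ -a₂)
              have := mul_le_mul_of_nonneg_left ih.1 ha1.le
              linarith
          _ ≤ M := by nlinarith
    obtain ⟨k, hk⟩ := (hulim.eventually (eventually_lt_atBot (ustar - M))).exists
    have := (abs_le.1 (hvb k).1).1
    simp only [hv] at this
    linarith
  · -- case (iv)
    set r : ℝ := Real.sqrt (a₂^2 + 4*a₁) with hr
    have hD : 0 < a₂^2 + 4*a₁ := by positivity
    have hr2 : r^2 = a₂^2 + 4*a₁ := Real.sq_sqrt hD.le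
    have hrpos : 0 < r := Real.sqrt_pos.2 hD
    set lp : ℝ := (a₂ + r)/2 with hlp
    set lm : ℝ := (a₂ - r)/2 with hlm
    have hlmneg : lm < 0 := by rw [hlm]; linarith
    have hlppos : 0 < lp := by
      have h1 : -a₂ < r := by nlinarith
      rw [hlp]; linarith
    have hrho1 : 1 < -lm := by
      have h2r : 2 + a₂ < r := by
        by_contra hcon
        push_neg at hcon
        nlinarith
      rw [hlm]; linarith
    set rho : ℝ := -lm with hrho
    have hsum : lp + lm = a₂ := by rw [hlp, hlm]; ring
    have hprod : lp * lm = -a₁ := by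
      have h1 : lp * lm = (a₂^2 - r^2)/4 := by rw [hlp, hlm]; ring
      rw [h1, hr2]; ring
    have hlplm : lp - lm = r := by rw [hlp, hlm]; ring
    have hlprho : lp < rho := by rw [hrho, hlm, hlp]; linarith
    set mu : ℝ := max 1 lp with hmu
    have hmurho : mu < rho := max_lt hrho1 hlprho
    have hmu1 : 1 ≤ mu := le_max_left _ _
    set nu : ℝ := (mu + rho)/2 with hnu
    have hnu1 : 1 ≤ nu := by rw [hnu]; have := hrho1; linarith
    have hnurho : nu < rho := by rw [hnu]; linarith
    have hlpnu : lp < nu := by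
      have : lp ≤ mu := le_max_right _ _
      rw [hnu]; linarith
    clear_value r lp lm rho mu nu
    set s : ℕ → ℝ := fun k => u (k+1) - lm * u k with hs
    set t : ℕ → ℝ := fun k => u (k+1) - lp * u k with htdef
    have hsrec : ∀ k, s (k+1) = lp * s k + L := by
      intro k
      simp only [hs]
      rw [hrec k]
      linear_combination (-(u (k+1))) * hsum + (u k) * hprod
    have htrec : ∀ k, t (k+1) = lm * t k + L := by
      intro k
      simp only [htdef]
      rw [hrec k]
      linear_combination (-(u (k+1))) * hsum + (u k) * hprod
    have h1lm : (0:ℝ) < 1 - lm := by linarith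
    set tstar : ℝ := L / (1 - lm) with htstar
    have htfix : lm * tstar + L = tstar := by
      rw [htstar]; field_simp
      ring
    have htpow : ∀ k, t k - tstar = lm^k * (t 0 - tstar) := by
      intro k
      induction k with
      | zero => simp
      | succ n ih =>
        rw [htrec n, pow_succ]
        linear_combination lm * ih + htfix
    clear_value tstar
    have hCpos : 0 < nu - lp := by linarith
    set C : ℝ := |s 0| + |L| / (nu - lp) with hC
    have hCnn : (0:ℝ) ≤ C := by positivity
    clear_value C
    have hsbound : ∀ k, |s k| ≤ C * nu^k := by
      intro k
      induction k with
      | zero =>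
        simp only [pow_zero, mul_one, hC]
        have : (0:ℝ) ≤ |L| / (nu - lp) := by positivity
        linarith
      | succ n ih =>
        have h1 : |s (n+1)| ≤ lp * |s n| + |L| := by
          rw [hsrec n]
          calc |lp * s n + L| ≤ |lp * s n| + |L| := abs_add_le _ _
            _ = lp * |s n| + |L| := by rw [abs_mul, abs_of_pos hlppos]
        have hnun : (1:ℝ) ≤ nu^n := one_le_pow₀ hnu1
        have h2 : |L| ≤ C * nu^n * (nu - lp) := by
          have h3 : |L| = (|L| / (nu - lp)) * (nu - lp) := by field_simp
          have h4 : |L| / (nu - lp) ≤ C := by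
            rw [hC]; have := abs_nonneg (s 0); linarith
          have q1 := mul_le_mul_of_nonneg_right h4 hCpos.le
          have q2 := mul_le_mul_of_nonneg_right hnun (mul_nonneg hCnn hCpos.le)
          linarith only [h3, q1, q2]
        have h5 := mul_le_mul_of_nonneg_left ih hlppos.le
        rw [pow_succ]
        nlinarith
    have hd0 : t 0 - tstar = 0 := by
      by_contra hd
      obtain ⟨b, hbneg⟩ : ∃ b : ℕ, lm^b * (t 0 - tstar) < 0 := by
        rcases lt_or_gt_of_ne hd with h|h
        · exact ⟨0, by simpa using h⟩
        · exact ⟨1, by simpa using mul_neg_of_neg_of_pos hlmneg h⟩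
      set E : ℝ := -(lm^b * (t 0 - tstar)) with hE
      have hEpos : 0 < E := by linarith
      have hlm2 : lm^2 = rho^2 := by rw [hrho]; ring
      have hmain : ∀ m : ℕ, E * (rho^2)^m ≤ |tstar| + C * nu^(b+1) * (nu^2)^m := by
        intro m
        have h1 : t (b+2*m) - tstar = -((rho^2)^m * E) := by
          rw [htpow (b+2*m), pow_add, pow_mul, hlm2, hE]
          ring
        have h4 : s (b+2*m) - t (b+2*m) = r * u (b+2*m) := by
          simp only [hs, htdef]
          linear_combination (u (b+2*m)) * hlplm
        have h5 : r * u (b+2*m) < 0 := mul_neg_of_pos_of_neg hrpos (hub _)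
        have h7 : -(C * nu^(b+2*m)) ≤ s (b+2*m) := (abs_le.1 (hsbound (b+2*m))).1
        have h8 : nu^(b+2*m) ≤ nu^(b+1) * (nu^2)^m := by
          rw [pow_add, pow_mul]
          have h9 : nu^b ≤ nu^(b+1) := pow_le_pow_right₀ hnu1 (Nat.le_succ b)
          have h10 : (0:ℝ) ≤ (nu^2)^m := by positivity
          nlinarith
        have h11 := mul_le_mul_of_nonneg_left h8 hCnn
        have h12 := le_abs_self tstar
        linarith only [h1, h4, h5, h7, h11, h12]
      have hq1 : ((rho^2)⁻¹ : ℝ) < 1 := by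
        rw [inv_lt_one_iff₀]
        right
        nlinarith [hrho1]
      have hq2 : nu^2 * (rho^2)⁻¹ < 1 := by
        rw [mul_inv_lt_iff₀ (by nlinarith [hrho1] : (0:ℝ) < rho^2), one_mul]
        nlinarith [hnurho, hnu1]
      have hF : Tendsto (fun m : ℕ => |tstar| * ((rho^2)⁻¹)^m
          + (C * nu^(b+1)) * (nu^2 * (rho^2)⁻¹)^m) atTop (nhds 0) := by
        have t1 := tendsto_pow_atTop_nhds_zero_of_lt_one (by positivity) hq1
        have t2 := tendsto_pow_atTop_nhds_zero_of_lt_one (by positivity) hq2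
        simpa using (t1.const_mul |tstar|).add (t2.const_mul (C * nu^(b+1)))
      have hEle : ∀ m : ℕ, E ≤ |tstar| * ((rho^2)⁻¹)^m
          + (C * nu^(b+1)) * (nu^2 * (rho^2)⁻¹)^m := by
        intro m
        have h0 : (0:ℝ) < (rho^2)^m := by positivity
        have h1 := mul_le_mul_of_nonneg_right (hmain m) (inv_pos.2 h0).le
        calc E = (E * (rho^2)^m) * ((rho^2)^m)⁻¹ := by
              field_simp
          _ ≤ (|tstar| + C * nu^(b+1) * (nu^2)^m) * ((rho^2)^m)⁻¹ := h1
          _ = |tstar| * ((rho^2)⁻¹)^m + (C * nu^(b+1)) * (nu^2 * (rho^2)⁻¹)^m := by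
              rw [mul_pow, inv_pow]
              ring
      exact absurd (ge_of_tendsto' hF hEle) (not_le.2 hEpos)
    -- conclude the curve equation
    have hu0 : u 0 = Real.log |p.1| := by
      simp only [hu, hW, Function.iterate_zero_apply]
    have hZ0 : Z 0 = p.2 := by
      simp only [hZ, Function.iterate_zero_apply]
    have h10 := hu1 0
    rw [hZ0, hu0] at h10
    simp only [htdef, hu0] at hd0
    linear_combination hd0 - h10 + Real.log |p.1| * hsum

theorem stmt16 (c₁ c₂ a₁ a₂ : ℝ) (hc₁ : c₁ ≠ 0) (hc₂ : c₂ ≠ 0) (ha₂ : a₂ < 0)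
    (g : ℝ × ℝ → ℝ × ℝ)
    (hg : ∀ w z : ℝ, g (w, z) = (c₁ * z * |w| ^ a₂, c₂ * Real.sign w * |w| ^ a₁)) :
    ∃ δ > 0, volume {p : ℝ × ℝ |
      (∀ k : ℕ, ‖g^[k] p‖ < δ) ∧
      Tendsto (fun k : ℕ => g^[k] p) atTop (nhds 0)} = 0 := by
  refine ⟨1, one_pos, ?_⟩
  set A : ℝ := (Real.log |c₁| + Real.log |c₂|) / (1 - (a₂ - Real.sqrt (a₂^2 + 4*a₁))/2)
      - Real.log |c₁| with hA
  set B : ℝ := (a₂ - Real.sqrt (a₂^2 + 4*a₁))/2 with hB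
  set Eset : Set (ℝ × ℝ) := {q : ℝ × ℝ | Real.log |q.2| = A - B * Real.log |q.1|} with hEset
  have hsub : {p : ℝ × ℝ |
      (∀ k : ℕ, ‖g^[k] p‖ < 1) ∧
      Tendsto (fun k : ℕ => g^[k] p) atTop (nhds 0)} ⊆
      (({0} : Set ℝ) ×ˢ (Set.univ : Set ℝ)) ∪ ((Set.univ : Set ℝ) ×ˢ ({0} : Set ℝ)) ∪ Eset := by
    intro p hp
    by_cases h1 : p.1 = 0
    · exact Or.inl (Or.inl ⟨h1, trivial⟩)
    by_cases h2 : p.2 = 0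
    · exact Or.inl (Or.inr ⟨trivial, h2⟩)
    exact Or.inr (stmt16_key c₁ c₂ a₁ a₂ hc₁ hc₂ ha₂ g hg p h1 h2 hp.1 hp.2)
  refine measure_mono_null hsub (measure_union_null (measure_union_null ?_ ?_) ?_)
  · rw [Measure.volume_eq_prod, Measure.prod_prod]
    simp
  · rw [Measure.volume_eq_prod, Measure.prod_prod]
    simp
  · have hmeas : MeasurableSet Eset := by
      have hf : Measurable fun q : ℝ × ℝ => Real.log |q.2| - (A - B * Real.log |q.1|) := by
        apply Measurable.sub
        · exact Real.measurable_log.comp measurable_snd.abs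
        · exact (measurable_const.sub
            ((Real.measurable_log.comp measurable_fst.abs).const_mul B))
      have : Eset = (fun q : ℝ × ℝ => Real.log |q.2| - (A - B * Real.log |q.1|)) ⁻¹' {0} := by
        ext q
        simp [hEset, sub_eq_zero]
      rw [this]
      exact hf (measurableSet_singleton 0)
    rw [Measure.volume_eq_prod, Measure.prod_apply hmeas]
    have hslice : ∀ x : ℝ, volume (Prod.mk x ⁻¹' Eset) = 0 := by
      intro x
      apply measure_mono_null (t :=
        ({Real.exp (A - B * Real.log |x|), -Real.exp (A - B * Real.log |x|), 0} : Set ℝ))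
      · intro y hy
        have hy' : Real.log |y| = A - B * Real.log |x| := hy
        by_cases hy0 : y = 0
        · simp [hy0]
        · have h1 : |y| = Real.exp (A - B * Real.log |x|) := by
            rw [← hy', Real.exp_log (abs_pos.2 hy0)]
          rcases (abs_eq (Real.exp_pos _).le).1 h1 with h|h
          · simp [h]
          · simp [h]
      · exact (Set.finite_singleton _ |>.insert _ |>.insert _).measure_zero _
    simp [hslice]
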